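/- Let G be a graph on [N] with maximal degree 4, and let π(t) be the law of the continuous-time unit-rate random walk on G with entries sorted in decreasing order π_{(1)}(t) ≥ ... ≥ π_{(N)}(t) (at a time t where the sorting permutation is locally constant). If |E(S,S^c)| ≥ c for all S of size m, then d/dt Σ_{i=1}^m π_{(i)}(t) ≤ −Σ_{j=1}^{⌊c/4⌋}(π_{(m−j+1)}(t) − π_{(m+j)}(t)) ≤ 0; in particular the sorted top-m mass Σ_{i≤m} π_{(i)}(t) is nonincreasing in t. -/

import Mathlib

open Finset

/-- Decrease of the sorted top-`m` mass: let `π` be the law of the continuous-time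
unit-rate random walk on a graph on `[N]` with symmetric 0/1 adjacency matrix `A` and
maximal degree 4 (so `dπ_i/dt = Σ_j A_{ij}(π_j − π_i)`), and suppose that at time `t` the
entries are sorted in decreasing order along the permutation `σ`, i.e.
`π_{σ(1)}(t) ≥ ... ≥ π_{σ(N)}(t)`.  If every set `S` of size `m` satisfies
`|E(S,Sᶜ)| ≥ c`, then any derivative `D` at `t` of the top-`m` mass
`Σ_{i ≤ m} π_{(i)}` satisfies
`D ≤ −Σ_{j=1}^{⌊c/4⌋} (π_{(m−j+1)}(t) − π_{(m+j)}(t))` and in particular `D ≤ 0`,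
so the top-`m` mass is nonincreasing. -/
theorem stmt_15 (N m c : ℕ)
    (A : Matrix (Fin N) (Fin N) ℝ) (hsymm : A.IsSymm)
    (h01 : ∀ u v, A u v = 0 ∨ A u v = 1) (hdiag : ∀ v, A v v = 0)
    (hdeg : ∀ v, ∑ u, A v u ≤ 4)
    (π : ℝ → Fin N → ℝ) (t : ℝ)
    (hwalk : ∀ (i : Fin N) (s : ℝ),
      HasDerivAt (fun r => π r i) (∑ j, A i j * (π s j - π s i)) s)
    (σ : Equiv.Perm (Fin N))
    (hsorted : ∀ i j : Fin N, i ≤ j → π t (σ j) ≤ π t (σ i))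
    (hcut : ∀ S : Finset (Fin N), S.card = m →
      (c : ℝ) ≤ ∑ u ∈ S, ∑ v ∈ Sᶜ, A u v)
    (hqm : c / 4 ≤ m) (hmN : m + c / 4 ≤ N)
    (D : ℝ)
    (hD : HasDerivAt
      (fun s => ∑ i ∈ Finset.univ.filter (fun j : Fin N => (j : ℕ) < m), π s (σ i)) D t) :
    D ≤ -(∑ j : Fin (c / 4),
        (π t (σ ⟨m - ((j : ℕ) + 1), by have := j.isLt; omega⟩) -
          π t (σ ⟨m + (j : ℕ), by have := j.isLt; omega⟩))) ∧ D ≤ 0 := by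
  classical
  set F : Finset (Fin N) := Finset.univ.filter (fun j : Fin N => (j : ℕ) < m) with hF
  have hD' : HasDerivAt (fun s => ∑ i ∈ F, π s (σ i))
      (∑ i ∈ F, ∑ j, A (σ i) j * (π t j - π t (σ i))) t :=
    HasDerivAt.fun_sum (fun i _ => hwalk (σ i) t)
  have hDeq : D = ∑ i ∈ F, ∑ j, A (σ i) j * (π t j - π t (σ i)) := hD.unique hD'
  by_cases hm0 : m = 0
  · have hc0 : c / 4 = 0 := by omega
    have hE : IsEmpty (Fin (c / 4)) := by rw [hc0]; infer_instance
    have hFe : F = ∅ := by ext i; simp [hF, hm0]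
    have hD0 : D = 0 := by rw [hDeq, hFe]; simp
    rw [hD0]
    rw [Finset.univ_eq_empty]
    simp
  -- main case
  have hm : 0 < m := Nat.pos_of_ne_zero hm0
  have hN : 0 < N := by omega
  set S : Finset (Fin N) := F.image σ with hS
  have hmemS : ∀ u, u ∈ S ↔ ((σ.symm u : ℕ) < m) := by
    intro u
    simp only [hS, hF, Finset.mem_image, Finset.mem_filter, Finset.mem_univ, true_and]
    constructor
    · rintro ⟨i, hi, rfl⟩; simpa using hi
    · intro h; exact ⟨σ.symm u, h, by simp⟩
  have hmemSc : ∀ v, v ∈ Sᶜ → m ≤ (σ.symm v : ℕ) := by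
    intro v hv
    by_contra h
    exact (Finset.mem_compl.mp hv) ((hmemS v).mpr (by omega))
  have hDeq2 : D = ∑ u ∈ S, ∑ j, A u j * (π t j - π t u) := by
    rw [hDeq, hS, Finset.sum_image (fun x _ y _ h => σ.injective h)]
  have hTzero : (∑ u ∈ S, ∑ v ∈ S, A u v * (π t v - π t u)) = 0 := by
    have h1 : (∑ u ∈ S, ∑ v ∈ S, A u v * (π t v - π t u))
        = ∑ u ∈ S, ∑ v ∈ S, A v u * (π t u - π t v) := Finset.sum_comm
    have h2 : (∑ u ∈ S, ∑ v ∈ S, A v u * (π t u - π t v))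
        + (∑ u ∈ S, ∑ v ∈ S, A u v * (π t v - π t u)) = 0 := by
      rw [← Finset.sum_add_distrib]
      refine Finset.sum_eq_zero fun u _ => ?_
      rw [← Finset.sum_add_distrib]
      refine Finset.sum_eq_zero fun v _ => ?_
      rw [hsymm.apply u v]; ring
    linarith
  have hDcut : D = ∑ u ∈ S, ∑ v ∈ Sᶜ, A u v * (π t v - π t u) := by
    rw [hDeq2]
    rw [Finset.sum_congr rfl
      (fun u _ => (Finset.sum_add_sum_compl S (fun j => A u j * (π t j - π t u))).symm)]
    rw [Finset.sum_add_distrib, hTzero, zero_add]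
  have hA0 : ∀ u v, 0 ≤ A u v := by
    intro u v; rcases h01 u v with h | h <;> rw [h] <;> norm_num
  have hlt : ∀ u ∈ S, ∀ v ∈ Sᶜ, π t v ≤ π t u := by
    intro u hu v hv
    have h1 : (σ.symm u : ℕ) < m := (hmemS u).mp hu
    have h2 : m ≤ (σ.symm v : ℕ) := hmemSc v hv
    have h3 := hsorted (σ.symm u) (σ.symm v) (by rw [Fin.le_def]; omega)
    simpa using h3
  have hD0 : D ≤ 0 := by
    rw [hDcut]
    refine Finset.sum_nonpos fun u hu => Finset.sum_nonpos fun v hv => ?_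
    exact mul_nonpos_of_nonneg_of_nonpos (hA0 u v) (by linarith [hlt u hu v hv])
  refine ⟨?_, hD0⟩
  -- sorted values function
  set f : ℕ → ℝ := fun k => π t (σ ⟨min k (N - 1), by omega⟩) with hf
  have hfmono : ∀ a b : ℕ, a ≤ b → f b ≤ f a := by
    intro a b hab
    exact hsorted _ _ (by rw [Fin.le_def]; simp; omega)
  have hfval : ∀ (k : ℕ) (hk : k < N), f k = π t (σ ⟨k, hk⟩) := by
    intro k hk
    have hmin : min k (N - 1) = k := by omega
    simp only [hf]
    congr 2
    exact Fin.ext (by simp [hmin])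
  set g : ℕ → ℝ := fun k => f k - f (k + 1) with hg
  have hg0 : ∀ k, 0 ≤ g k := fun k => sub_nonneg.mpr (hfmono k (k + 1) (Nat.le_succ k))
  have htel : ∀ a b : ℕ, a ≤ b → f a - f b = ∑ k ∈ Finset.Ico a b, g k := by
    intro a b hab
    rw [Finset.sum_Ico_eq_sub _ hab]
    simp only [hg]
    rw [Finset.sum_range_sub' f, Finset.sum_range_sub' f]
    ring
  have hfu : ∀ w : Fin N, π t w = f ((σ.symm w : ℕ)) := by
    intro w
    rw [hfval _ (σ.symm w).isLt, Fin.eta, Equiv.apply_symm_apply]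
  -- rewrite L as sum over gaps
  have hScard : S.card = m := by
    rw [hS, Finset.card_image_of_injective _ σ.injective]
    rw [← Finset.card_map ⟨Fin.val, Fin.val_injective⟩]
    rw [show F.map ⟨Fin.val, Fin.val_injective⟩ = Finset.range m from ?_]
    · exact Finset.card_range m
    · ext x
      simp only [Finset.mem_map, hF, Finset.mem_filter, Finset.mem_univ, true_and,
        Function.Embedding.coeFn_mk, Finset.mem_range]
      constructor
      · rintro ⟨a, ha, rfl⟩; exact ha
      · intro hx; exact ⟨⟨x, by omega⟩, hx, rfl⟩
  set L : ℝ := ∑ u ∈ S, ∑ v ∈ Sᶜ, A u v * (π t u - π t v) with hL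
  have hDL : D = -L := by
    rw [hDcut, hL, ← Finset.sum_neg_distrib]
    refine Finset.sum_congr rfl fun u _ => ?_
    rw [← Finset.sum_neg_distrib]
    exact Finset.sum_congr rfl fun v _ => by ring
  set n : ℕ → ℝ := fun k =>
    ∑ u ∈ S, ∑ v ∈ Sᶜ, if (σ.symm u : ℕ) ≤ k ∧ k < (σ.symm v : ℕ) then A u v else 0 with hn
  have hLg : L = ∑ k ∈ Finset.range N, n k * g k := by
    rw [hL]
    have step1 : ∀ u ∈ S, ∀ v ∈ Sᶜ, A u v * (π t u - π t v)
        = ∑ k ∈ Finset.range N,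
            (if (σ.symm u : ℕ) ≤ k ∧ k < (σ.symm v : ℕ) then A u v else 0) * g k := by
      intro u hu v hv
      have hru : (σ.symm u : ℕ) < m := (hmemS u).mp hu
      have hrv : m ≤ (σ.symm v : ℕ) := hmemSc v hv
      have hrvN : (σ.symm v : ℕ) < N := (σ.symm v).isLt
      rw [hfu u, hfu v, htel _ _ (by omega), Finset.mul_sum]
      rw [show Finset.Ico ((σ.symm u : ℕ)) ((σ.symm v : ℕ))
          = (Finset.range N).filter
              (fun k => (σ.symm u : ℕ) ≤ k ∧ k < (σ.symm v : ℕ)) from by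
        ext k
        simp only [Finset.mem_Ico, Finset.mem_filter, Finset.mem_range]
        omega]
      rw [Finset.sum_filter]
      refine Finset.sum_congr rfl fun k _ => ?_
      split_ifs <;> simp
    rw [Finset.sum_congr rfl (fun u hu => Finset.sum_congr rfl (fun v hv => step1 u hu v hv))]
    rw [Finset.sum_congr rfl fun u _ => Finset.sum_comm, Finset.sum_comm]
    refine Finset.sum_congr rfl fun k _ => ?_
    rw [hn, Finset.sum_mul]
    exact Finset.sum_congr rfl fun u _ => by rw [Finset.sum_mul]
  -- the "distance to cut" function
  set d : ℕ → ℕ := fun k => if k < m then m - 1 - k else k + 1 - m with hd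
  -- the RHS as a sum over gaps
  have hRf : (∑ j : Fin (c / 4), (f (m - ((j : ℕ) + 1)) - f (m + (j : ℕ))))
      = ∑ k ∈ Finset.range N, ((c / 4 - d k : ℕ) : ℝ) * g k := by
    calc (∑ j : Fin (c / 4), (f (m - ((j : ℕ) + 1)) - f (m + (j : ℕ))))
        = ∑ j : Fin (c / 4), ∑ k ∈ Finset.range N,
            (if d k ≤ (j : ℕ) then g k else 0) := by
          refine Finset.sum_congr rfl fun j _ => ?_
          have hj := j.isLt
          rw [htel _ _ (by omega)]
          rw [show Finset.Ico (m - ((j : ℕ) + 1)) (m + (j : ℕ))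
              = (Finset.range N).filter (fun k => d k ≤ (j : ℕ)) from by
            ext k
            simp only [Finset.mem_Ico, Finset.mem_filter, Finset.mem_range, hd]
            split_ifs <;> omega]
          rw [Finset.sum_filter]
      _ = ∑ k ∈ Finset.range N, ∑ j : Fin (c / 4),
            (if d k ≤ (j : ℕ) then g k else 0) := Finset.sum_comm
      _ = ∑ k ∈ Finset.range N, ((c / 4 - d k : ℕ) : ℝ) * g k := by
          refine Finset.sum_congr rfl fun k _ => ?_
          rw [show (∑ j : Fin (c / 4), if d k ≤ (j : ℕ) then g k else 0)
              = (∑ j : Fin (c / 4), if d k ≤ (j : ℕ) then (1 : ℝ) else 0) * g k from by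
            rw [Finset.sum_mul]
            exact Finset.sum_congr rfl fun j _ => by split_ifs <;> simp]
          congr 1
          rw [Fin.sum_univ_eq_sum_range (fun j => if d k ≤ j then (1 : ℝ) else 0)]
          rw [← Finset.sum_filter]
          rw [show (Finset.range (c / 4)).filter (fun j => d k ≤ j)
              = Finset.Ico (d k) (c / 4) from by ext x; simp [Finset.mem_Ico]; omega]
          simp [Nat.card_Ico]
  -- degree bounds
  have hrowbound : ∀ u, ∑ v ∈ Sᶜ, A u v ≤ 4 := fun u =>
    le_trans (Finset.sum_le_sum_of_subset_of_nonneg (Finset.subset_univ _)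
      (fun v _ _ => hA0 u v)) (hdeg u)
  have hcolbound : ∀ v, ∑ u ∈ S, A u v ≤ 4 := by
    intro v
    calc ∑ u ∈ S, A u v ≤ ∑ u : Fin N, A u v :=
          Finset.sum_le_sum_of_subset_of_nonneg (Finset.subset_univ _) (fun u _ _ => hA0 u v)
      _ = ∑ u, A v u := Finset.sum_congr rfl fun u _ => hsymm.apply v u
      _ ≤ 4 := hdeg v
  have hinj : Function.Injective (fun u : Fin N => (σ.symm u : ℕ)) :=
    Fin.val_injective.comp σ.symm.injective
  -- bound the missing cut mass
  have hB : ∀ k, (∑ u ∈ S, ∑ v ∈ Sᶜ,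
      if ¬((σ.symm u : ℕ) ≤ k ∧ k < (σ.symm v : ℕ)) then A u v else 0) ≤ 4 * (d k : ℝ) := by
    intro k
    rcases lt_or_ge k m with hk | hk
    · -- k < m : missing edges come from u with k < r u < m
      have hdk : d k = m - 1 - k := by simp [hd, hk]
      calc (∑ u ∈ S, ∑ v ∈ Sᶜ,
            if ¬((σ.symm u : ℕ) ≤ k ∧ k < (σ.symm v : ℕ)) then A u v else 0)
          ≤ ∑ u ∈ S, (if k < (σ.symm u : ℕ) then (4 : ℝ) else 0) := by
            refine Finset.sum_le_sum fun u hu => ?_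
            by_cases hku : k < (σ.symm u : ℕ)
            · simp only [hku, if_true]
              calc (∑ v ∈ Sᶜ, if ¬((σ.symm u : ℕ) ≤ k ∧ k < (σ.symm v : ℕ)) then A u v else 0)
                  ≤ ∑ v ∈ Sᶜ, A u v := Finset.sum_le_sum fun v _ => by
                    split_ifs <;> first | exact le_rfl | exact hA0 u v
                _ ≤ 4 := hrowbound u
            · simp only [hku, if_false]
              refine le_of_eq (Finset.sum_eq_zero fun v hv => ?_)
              have hrv := hmemSc v hv
              rw [if_neg]
              omega
          _ = 4 * ((S.filter (fun u => k < (σ.symm u : ℕ))).card : ℝ) := by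
            rw [← Finset.sum_filter, Finset.sum_const, nsmul_eq_mul, mul_comm]
          _ ≤ 4 * (d k : ℝ) := by
            have hcard : (S.filter (fun u => k < (σ.symm u : ℕ))).card ≤ d k := by
              have hsub : ∀ u ∈ S.filter (fun u => k < (σ.symm u : ℕ)),
                  (σ.symm u : ℕ) ∈ Finset.Ico (k + 1) m := by
                intro u hu
                rw [Finset.mem_filter] at hu
                have := (hmemS u).mp hu.1
                simp only [Finset.mem_Ico]
                omega
              calc (S.filter (fun u => k < (σ.symm u : ℕ))).card
                  ≤ (Finset.Ico (k + 1) m).card :=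
                    Finset.card_le_card_of_injOn _ hsub hinj.injOn
                _ = m - (k + 1) := Nat.card_Ico _ _
                _ ≤ d k := by omega
            have : ((S.filter (fun u => k < (σ.symm u : ℕ))).card : ℝ) ≤ (d k : ℝ) := by
              exact_mod_cast hcard
            linarith
    · -- m ≤ k : missing edges come from v with m ≤ r v ≤ k
      have hdk : d k = k + 1 - m := by simp [hd]; omega
      rw [Finset.sum_comm]
      calc (∑ v ∈ Sᶜ, ∑ u ∈ S,
            if ¬((σ.symm u : ℕ) ≤ k ∧ k < (σ.symm v : ℕ)) then A u v else 0)
          ≤ ∑ v ∈ Sᶜ, (if (σ.symm v : ℕ) ≤ k then (4 : ℝ) else 0) := by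
            refine Finset.sum_le_sum fun v hv => ?_
            by_cases hkv : (σ.symm v : ℕ) ≤ k
            · simp only [hkv, if_true]
              calc (∑ u ∈ S, if ¬((σ.symm u : ℕ) ≤ k ∧ k < (σ.symm v : ℕ)) then A u v else 0)
                  ≤ ∑ u ∈ S, A u v := Finset.sum_le_sum fun u _ => by
                    split_ifs <;> first | exact le_rfl | exact hA0 u v
                _ ≤ 4 := hcolbound v
            · simp only [hkv, if_false]
              refine le_of_eq (Finset.sum_eq_zero fun u hu => ?_)
              have hru := (hmemS u).mp hu
              rw [if_neg]
              omega
          _ = 4 * ((Sᶜ.filter (fun v => (σ.symm v : ℕ) ≤ k)).card : ℝ) := by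
            rw [← Finset.sum_filter, Finset.sum_const, nsmul_eq_mul, mul_comm]
          _ ≤ 4 * (d k : ℝ) := by
            have hcard : (Sᶜ.filter (fun v => (σ.symm v : ℕ) ≤ k)).card ≤ d k := by
              have hsub : ∀ v ∈ Sᶜ.filter (fun v => (σ.symm v : ℕ) ≤ k),
                  (σ.symm v : ℕ) ∈ Finset.Ico m (k + 1) := by
                intro v hv
                rw [Finset.mem_filter] at hv
                have := hmemSc v hv.1
                simp only [Finset.mem_Ico]
                omega
              calc (Sᶜ.filter (fun v => (σ.symm v : ℕ) ≤ k)).card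
                  ≤ (Finset.Ico m (k + 1)).card :=
                    Finset.card_le_card_of_injOn _ hsub hinj.injOn
                _ = k + 1 - m := Nat.card_Ico _ _
                _ ≤ d k := by omega
            have : ((Sᶜ.filter (fun v => (σ.symm v : ℕ) ≤ k)).card : ℝ) ≤ (d k : ℝ) := by
              exact_mod_cast hcard
            linarith
  -- the per-gap comparison
  have hmain : ∀ k ∈ Finset.range N, ((c / 4 - d k : ℕ) : ℝ) * g k ≤ n k * g k := by
    intro k _
    refine mul_le_mul_of_nonneg_right ?_ (hg0 k)
    have hn0 : 0 ≤ n k := by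
      rw [hn]
      refine Finset.sum_nonneg fun u _ => Finset.sum_nonneg fun v _ => ?_
      split_ifs <;> [exact hA0 u v; exact le_refl _]
    by_cases hdk : c / 4 ≤ d k
    · rw [Nat.sub_eq_zero_of_le hdk]
      simpa using hn0
    · push_neg at hdk
      have hsplitC : (∑ u ∈ S, ∑ v ∈ Sᶜ, A u v)
          = n k + (∑ u ∈ S, ∑ v ∈ Sᶜ,
              if ¬((σ.symm u : ℕ) ≤ k ∧ k < (σ.symm v : ℕ)) then A u v else 0) := by
        rw [hn, ← Finset.sum_add_distrib]
        refine Finset.sum_congr rfl fun u _ => ?_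
        rw [← Finset.sum_add_distrib]
        refine Finset.sum_congr rfl fun v _ => ?_
        by_cases h : (σ.symm u : ℕ) ≤ k ∧ k < (σ.symm v : ℕ) <;> simp [h]
      have hC := hcut S hScard
      have hBk := hB k
      have h4 : (4 * (c / 4) : ℕ) ≤ c := Nat.mul_div_le c 4 |>.trans_eq rfl
      have h4' : ((4 * (c / 4) : ℕ) : ℝ) ≤ (c : ℝ) := by exact_mod_cast h4
      have hcast : ((c / 4 - d k : ℕ) : ℝ) = ((c / 4 : ℕ) : ℝ) - ((d k : ℕ) : ℝ) := by
        rw [Nat.cast_sub (le_of_lt hdk)]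
      have hdle : ((d k : ℕ) : ℝ) ≤ ((c / 4 : ℕ) : ℝ) := by exact_mod_cast le_of_lt hdk
      rw [hcast]
      push_cast at h4' ⊢
      linarith
  -- put everything together
  have hfinal : (∑ j : Fin (c / 4), (f (m - ((j : ℕ) + 1)) - f (m + (j : ℕ)))) ≤ L := by
    rw [hRf, hLg]
    exact Finset.sum_le_sum hmain
  have hstep : D ≤ -(∑ j : Fin (c / 4), (f (m - ((j : ℕ) + 1)) - f (m + (j : ℕ)))) := by
    rw [hDL]
    linarith
  have heq2 : (∑ j : Fin (c / 4), (f (m - ((j : ℕ) + 1)) - f (m + (j : ℕ))))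
      = ∑ j : Fin (c / 4), (π t (σ ⟨m - ((j : ℕ) + 1), by have := j.isLt; omega⟩)
          - π t (σ ⟨m + (j : ℕ), by have := j.isLt; omega⟩)) := by
    refine Finset.sum_congr rfl fun j _ => ?_
    rw [hfval _ (show m - ((j : ℕ) + 1) < N by have := j.isLt; omega),
        hfval _ (show m + (j : ℕ) < N by have := j.isLt; omega)]
  exact le_trans hstep (le_of_eq (congrArg Neg.neg heq2))
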